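/- Let Ω, U, λ, u be as in the setting. Then the singular set { z ∈ closure(Ω) : u(z) = 0 and ∇u(z) = 0 } is a finite set. -/

import Mathlib

open Metric Set Filter Topology MeasureTheory

noncomputable section

abbrev E2 := EuclideanSpace ℝ (Fin 2)

/-- The Laplacian of `u`: the sum of the two pure second partial derivatives. -/
def lap (u : E2 → ℝ) (z : E2) : ℝ :=
  ∑ i : Fin 2, iteratedFDeriv ℝ 2 u z (fun _ => EuclideanSpace.single i 1)

namespace SingAux

variable {E F : Type*} [NormedAddCommGroup E] [NormedSpace ℝ E]
  [NormedAddCommGroup F] [NormedSpace ℝ F]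

open FormalMultilinearSeries

lemma derivSeries_congr (p q : FormalMultilinearSeries ℝ E F) (n : ℕ)
    (h : p (1 + n) = q (1 + n)) : p.derivSeries n = q.derivSeries n := by
  simp only [derivSeries, ContinuousLinearMap.compFormalMultilinearSeries_apply,
    changeOriginSeries, changeOriginSeriesTerm, h]

lemma derivSeries_eq_zero (p : FormalMultilinearSeries ℝ E F) (n : ℕ)
    (h : p (1 + n) = 0) : p.derivSeries n = 0 := by
  ext v w
  simp only [derivSeries, ContinuousLinearMap.compFormalMultilinearSeries_apply,
    changeOriginSeries, changeOriginSeriesTerm, h, _root_.map_zero,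
    ContinuousLinearMap.compContinuousMultilinearMap_coe, Function.comp_apply,
    ContinuousMultilinearMap.sum_apply, ContinuousMultilinearMap.zero_apply,
    Finset.sum_const_zero, map_sum]
  simp

/-- The formal multilinear series that has `p n` in degree `n` and `0` elsewhere. -/
def diagSeries (p : FormalMultilinearSeries ℝ E F) (n : ℕ) : FormalMultilinearSeries ℝ E F :=
  fun k => if k = n then p k else 0

lemma hasFiniteFPowerSeriesOnBall_diag (p : FormalMultilinearSeries ℝ E F) (n : ℕ) :
    HasFiniteFPowerSeriesOnBall (fun z => p n (fun _ => z)) (diagSeries p n) 0 (n + 1) ⊤ := by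
  apply HasFiniteFPowerSeriesOnBall.mk'
  · intro m hm
    simp only [diagSeries, ite_eq_right_iff]
    intro h; omega
  · exact ENNReal.zero_lt_top
  · intro y hy
    rw [zero_add, Finset.sum_eq_single n]
    · simp [diagSeries]
    · intro b _ hb
      simp [diagSeries, hb]
    · intro hn
      exact absurd (Finset.self_mem_range_succ n) hn


lemma derivSeries_apply_diag_eq_fderiv (p : FormalMultilinearSeries ℝ E F) (n : ℕ) (y : E) :
    p.derivSeries n (fun _ => y) = fderiv ℝ (fun z => p (1 + n) (fun _ => z)) y := by
  have h := (hasFiniteFPowerSeriesOnBall_diag p (1 + n)).fderiv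
  have hy : y ∈ EMetric.ball (0 : E) ⊤ := EMetric.mem_ball.2 (edist_lt_top _ _)
  have hs := h.toHasFPowerSeriesOnBall.hasSum (y := y) hy
  rw [zero_add] at hs
  have hterm : (fun k => (diagSeries p (1 + n)).derivSeries k (fun _ => y)) =
      fun k => if k = n then p.derivSeries n (fun _ => y) else 0 := by
    funext k
    rcases eq_or_ne k n with hkn | hk
    · subst hkn
      rw [if_pos rfl]
      have : diagSeries p (1 + k) (1 + k) = p (1 + k) := by simp [diagSeries]
      rw [derivSeries_congr _ _ _ this]
    · rw [if_neg hk]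
      have : diagSeries p (1 + n) (1 + k) = 0 := by
        simp only [diagSeries, ite_eq_right_iff]; omega
      rw [derivSeries_eq_zero _ _ this]
      rfl
  rw [hterm] at hs
  have := hs.unique (hasSum_ite_eq n _)
  -- this : fderiv ℝ (fun z => p (1+n) (fun _ => z)) y = p.derivSeries n fun _ => y
  exact this.symm



lemma fderiv_homog {E : Type*} [NormedAddCommGroup E] [NormedSpace ℝ E]
    (Q : E → ℝ) (N : ℕ) (hN : 1 ≤ N)
    (hQdiff : ∀ y, DifferentiableAt ℝ Q y)
    (hhom : ∀ (t : ℝ) (y : E), Q (t • y) = t ^ N * Q y)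
    {t : ℝ} (ht : t ≠ 0) (y : E) :
    fderiv ℝ Q (t • y) = t ^ (N - 1) • fderiv ℝ Q y := by
  have e1 : (fun z => Q (t • z)) = fun z => t ^ N • Q z := by
    funext z; rw [hhom t z, smul_eq_mul]
  have h1 : HasFDerivAt (fun z => Q (t • z))
      ((fderiv ℝ Q (t • y)).comp (t • ContinuousLinearMap.id ℝ E)) y := by
    have := (hQdiff (t • y)).hasFDerivAt.comp y
      ((hasFDerivAt_id y).const_smul t)
    exact this
  have h2 : HasFDerivAt (fun z => t ^ N • Q z) (t ^ N • fderiv ℝ Q y) y :=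
    (hQdiff y).hasFDerivAt.const_smul (t ^ N)
  rw [e1] at h1
  have h3 := h1.unique h2
  ext w
  have h4 := congrArg (fun (L : E →L[ℝ] ℝ) => L w) h3
  simp only [ContinuousLinearMap.coe_comp', Function.comp_apply,
    ContinuousLinearMap.smul_apply, ContinuousLinearMap.coe_smul',
    ContinuousLinearMap.coe_id', Pi.smul_apply, id_eq, smul_eq_mul] at h4 ⊢
  have ht' : fderiv ℝ Q (t • y) (t • w) = t * fderiv ℝ Q (t • y) w := by
    rw [_root_.map_smul, smul_eq_mul]
  rw [ht'] at h4
  have hpow : t ^ N = t * t ^ (N - 1) := by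
    conv_lhs => rw [show N = 1 + (N - 1) by omega]
    rw [pow_add, pow_one]
  rw [hpow, mul_assoc] at h4
  exact mul_left_cancel₀ ht h4

end SingAux

namespace SingAux

open FormalMultilinearSeries

def ee (i : Fin 2) : E2 := EuclideanSpace.single i (1 : ℝ)

/-- the real-linear identification of `ℂ` with `E2` -/
def iota : ℂ →L[ℝ] E2 :=
  Complex.reCLM.smulRight (ee 0) + Complex.imCLM.smulRight (ee 1)

lemma iota_apply (z : ℂ) : iota z = z.re • ee 0 + z.im • ee 1 := rfl

lemma iota_one : iota 1 = ee 0 := by simp [iota_apply]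

lemma iota_I : iota Complex.I = ee 1 := by simp [iota_apply]

lemma ee_apply (i j : Fin 2) : ee i j = if i = j then 1 else 0 := by
  simp [ee, EuclideanSpace.single_apply]
  exact if_congr eq_comm rfl rfl

lemma decomp (y : E2) : y = y 0 • ee 0 + y 1 • ee 1 := by
  ext j
  fin_cases j <;> simp [ee_apply]

lemma iota_surj (y : E2) : iota (Complex.mk (y 0) (y 1)) = y := by
  rw [iota_apply]
  exact (decomp y).symm

lemma iota_injective (z : ℂ) (h : iota z = 0) : z = 0 := by
  have h0 := congrFun (congrArg (fun v : E2 => (v : Fin 2 → ℝ)) h) 0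
  have h1 := congrFun (congrArg (fun v : E2 => (v : Fin 2 → ℝ)) h) 1
  simp [iota_apply, ee_apply] at h0 h1
  exact Complex.ext h0 h1


/-- A nonconstant harmonic-homogeneous polynomial-like function on the plane has no critical
points away from the origin. -/
lemma eq_const_of_critical (Q : E2 → ℝ) (N : ℕ) (hN : 1 ≤ N)
    (hQan : ∀ y, AnalyticAt ℝ Q y)
    (hhom : ∀ (t : ℝ) (y : E2), Q (t • y) = t ^ N * Q y)
    (hharm : ∀ y, fderiv ℝ (fderiv ℝ Q) y (ee 0) (ee 0)
      + fderiv ℝ (fderiv ℝ Q) y (ee 1) (ee 1) = 0)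
    (y₀ : E2) (hy₀ : y₀ ≠ 0) (h0 : fderiv ℝ Q y₀ = 0) :
    ∀ y, Q y = Q 0 := by
  have hQdiff : ∀ y, DifferentiableAt ℝ Q y := fun y => (hQan y).differentiableAt
  have hDQdiff : ∀ y, DifferentiableAt ℝ (fderiv ℝ Q) y :=
    fun y => ((hQan y).fderiv).differentiableAt
  set D2 : E2 → E2 →L[ℝ] E2 →L[ℝ] ℝ := fun y => fderiv ℝ (fderiv ℝ Q) y with hD2
  have hsym : ∀ y v w, D2 y v w = D2 y w v := fun y v w =>
    second_derivative_symmetric (f' := fderiv ℝ Q)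
      (fun z => (hQdiff z).hasFDerivAt) (hDQdiff y).hasFDerivAt v w
  -- homogeneity of the gradient
  have hDQhom : ∀ (t : ℝ), t ≠ 0 → ∀ y, fderiv ℝ Q (t • y) = t ^ (N - 1) • fderiv ℝ Q y :=
    fun t ht y => fderiv_homog Q N hN hQdiff hhom ht y
  -- definition of the associated complex function
  set a : ℂ → ℝ := fun z => fderiv ℝ Q (iota z) (ee 0) with ha
  set b : ℂ → ℝ := fun z => fderiv ℝ Q (iota z) (ee 1) with hb
  set G : ℂ → ℂ := fun z => (a z : ℂ) - Complex.I * (b z : ℂ) with hG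
  -- G is complex-differentiable
  have hGdiff : Differentiable ℂ G := by
    intro z
    set La : ℂ →L[ℝ] ℝ := ((ContinuousLinearMap.apply ℝ ℝ (ee 0)).comp
      ((D2 (iota z)).comp iota)) with hLa
    set Lb : ℂ →L[ℝ] ℝ := ((ContinuousLinearMap.apply ℝ ℝ (ee 1)).comp
      ((D2 (iota z)).comp iota)) with hLb
    have haD : HasFDerivAt a La z := by
      have h1 : HasFDerivAt (fun w : ℂ => iota w) iota z := iota.hasFDerivAt
      have h2 : HasFDerivAt (fderiv ℝ Q) (D2 (iota z)) (iota z) :=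
        (hDQdiff (iota z)).hasFDerivAt
      have h3 := ((ContinuousLinearMap.apply ℝ ℝ (ee 0)).hasFDerivAt
        (x := fderiv ℝ Q (iota z)))
      exact h3.comp z (h2.comp z h1)
    have hbD : HasFDerivAt b Lb z := by
      have h1 : HasFDerivAt (fun w : ℂ => iota w) iota z := iota.hasFDerivAt
      have h2 : HasFDerivAt (fderiv ℝ Q) (D2 (iota z)) (iota z) :=
        (hDQdiff (iota z)).hasFDerivAt
      have h3 := ((ContinuousLinearMap.apply ℝ ℝ (ee 1)).hasFDerivAt
        (x := fderiv ℝ Q (iota z)))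
      exact h3.comp z (h2.comp z h1)
    set LG : ℂ →L[ℝ] ℂ := Complex.ofRealCLM.comp La - Complex.I • Complex.ofRealCLM.comp Lb
      with hLG
    have hGD : HasFDerivAt G LG z := by
      have h1 : HasFDerivAt (fun w => (a w : ℂ)) (Complex.ofRealCLM.comp La) z :=
        Complex.ofRealCLM.hasFDerivAt.comp z haD
      have h2 : HasFDerivAt (fun w => Complex.I * (b w : ℂ))
          (Complex.I • Complex.ofRealCLM.comp Lb) z := by
        have := (Complex.ofRealCLM.hasFDerivAt.comp z hbD).const_smul (Complex.I)
        exact this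
      exact h1.sub h2
    -- Cauchy-Riemann: LG is complex-linear
    have hLa1 : La 1 = D2 (iota z) (ee 0) (ee 0) := by simp [hLa, iota_one]
    have hLaI : La Complex.I = D2 (iota z) (ee 1) (ee 0) := by simp [hLa, iota_I]
    have hLb1 : Lb 1 = D2 (iota z) (ee 0) (ee 1) := by simp [hLb, iota_one]
    have hLbI : Lb Complex.I = D2 (iota z) (ee 1) (ee 1) := by simp [hLb, iota_I]
    have hCR : LG Complex.I = Complex.I * LG 1 := by
      simp only [hLG, ContinuousLinearMap.sub_apply, ContinuousLinearMap.smul_apply,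
        ContinuousLinearMap.coe_comp', Function.comp_apply, Complex.ofRealCLM_apply,
        smul_eq_mul]
      rw [hLa1, hLaI, hLb1, hLbI]
      have h1 : D2 (iota z) (ee 1) (ee 0) = D2 (iota z) (ee 0) (ee 1) := hsym _ _ _
      have h2 : D2 (iota z) (ee 1) (ee 1) = - D2 (iota z) (ee 0) (ee 0) := by
        have := hharm (iota z); linarith [this]
      rw [h1, h2]
      simp only [Complex.ofReal_neg]
      ring_nf
      rw [Complex.I_sq]
      ring
    -- conclude complex differentiability
    refine (hasFDerivAt_of_restrictScalars (𝕜 := ℝ) (𝕜' := ℂ)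
      (f' := ContinuousLinearMap.smulRight (1 : ℂ →L[ℂ] ℂ) (LG 1)) hGD ?_).differentiableAt
    ext w
    have hw : w = w.re • (1 : ℂ) + w.im • Complex.I := by
      rw [Complex.real_smul, Complex.real_smul, mul_one, Complex.re_add_im]
    simp only [ContinuousLinearMap.coe_restrictScalars']
    show w • LG 1 = LG w
    conv_rhs => rw [hw]
    rw [_root_.map_add, _root_.map_smul, _root_.map_smul, hCR]
    simp only [Complex.real_smul, smul_eq_mul]
    conv_lhs => rw [← Complex.re_add_im w]
    ring
  -- G vanishes on a line, hence everywhere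
  have hGzero : ∀ t : ℝ, t ≠ 0 → G ((t : ℂ) * Complex.mk (y₀ 0) (y₀ 1)) = 0 := by
    intro t ht
    have hi : iota ((t : ℂ) * Complex.mk (y₀ 0) (y₀ 1)) = t • y₀ := by
      have : (t : ℂ) * Complex.mk (y₀ 0) (y₀ 1) = t • Complex.mk (y₀ 0) (y₀ 1) := by
        simp [Complex.real_smul]
      rw [this, _root_.map_smul, iota_surj]
    have hz : fderiv ℝ Q (t • y₀) = 0 := by
      rw [hDQhom t ht y₀, h0, smul_zero]
    simp only [hG, ha, hb, hi, hz]
    simp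
  have hz₀ : Complex.mk (y₀ 0) (y₀ 1) ≠ 0 := by
    intro h
    exact hy₀ (by rw [← iota_surj y₀, h, _root_.map_zero])
  have hfreq : ∃ᶠ z in 𝓝[≠] (0 : ℂ), G z = 0 := by
    have htend : Tendsto (fun n : ℕ => (Complex.ofReal ((n + 1 : ℝ)⁻¹)) *
        Complex.mk (y₀ 0) (y₀ 1)) atTop (𝓝[≠] (0 : ℂ)) := by
      apply tendsto_nhdsWithin_of_tendsto_nhds_of_eventually_within
      · have hr : Tendsto (fun n : ℕ => (n + 1 : ℝ)⁻¹) atTop (𝓝 0) := by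
          simpa [one_div] using tendsto_one_div_add_atTop_nhds_zero_nat (𝕜 := ℝ)
        have h1 : Tendsto (fun n : ℕ => Complex.ofReal ((n + 1 : ℝ)⁻¹)) atTop (𝓝 0) := by
          have h2 := (Complex.continuous_ofReal.tendsto (0 : ℝ)).comp hr
          rw [Complex.ofReal_zero] at h2
          exact h2
        simpa using h1.mul_const _
      · filter_upwards with n
        simp only [mem_compl_iff, mem_singleton_iff]
        intro h
        rcases mul_eq_zero.1 h with h | h
        · rw [Complex.ofReal_eq_zero, inv_eq_zero] at h
          have : (0:ℝ) < n + 1 := by positivity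
          linarith
        · exact hz₀ h
    refine htend.frequently (p := fun z => G z = 0) (Filter.Eventually.frequently
      (Filter.Eventually.of_forall (fun n => hGzero ((n + 1 : ℝ))⁻¹ (by positivity))))
  have hGan : AnalyticOnNhd ℂ G univ :=
    hGdiff.differentiableOn.analyticOnNhd isOpen_univ
  have hG0 : EqOn G 0 univ :=
    hGan.eqOn_zero_of_preconnected_of_frequently_eq_zero isPreconnected_univ (mem_univ 0) hfreq
  -- hence the gradient of Q vanishes identically
  have hgrad : ∀ y, fderiv ℝ Q y = 0 := by
    intro y
    have hGy := hG0 (mem_univ (Complex.mk (y 0) (y 1)))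
    simp only [hG, ha, hb, Pi.zero_apply, iota_surj y] at hGy
    have hre := congrArg Complex.re hGy
    have him := congrArg Complex.im hGy
    simp at hre him
    ext w
    conv_lhs => rw [show w = w 0 • ee 0 + w 1 • ee 1 from decomp w]
    rw [_root_.map_add, _root_.map_smul, _root_.map_smul, hre, him]
    simp
  -- so Q is constant
  intro y
  exact is_const_of_fderiv_eq_zero (fun z => hQdiff z) hgrad y 0


end SingAux

open SingAux
set_option maxHeartbeats 2000000

/-- The singular set of the eigenfunction `u` on `closure Ω` is finite. -/
theorem singular_set_finite
    (Ω U : Set E2) (hΩne : Ω.Nonempty) (hΩo : IsOpen Ω)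
    (hΩb : Bornology.IsBounded Ω)
    (hUo : IsOpen U) (hUconn : IsConnected U) (hsub : closure Ω ⊆ U)
    (lam : ℝ) (hlam : 0 < lam)
    (u : E2 → ℝ) (hu : AnalyticOnNhd ℝ u U)
    (hne : ∃ z ∈ U, u z ≠ 0)
    (heq : ∀ z ∈ U, lap u z + lam * u z = 0) :
    {z ∈ closure Ω | u z = 0 ∧ gradient u z = 0}.Finite := by
  classical
  set S := {z ∈ closure Ω | u z = 0 ∧ gradient u z = 0} with hSdef
  -- gradient vs fderiv
  have hgf : ∀ z, gradient u z = 0 → fderiv ℝ u z = 0 := by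
    intro z h
    have h2 : (InnerProductSpace.toDual ℝ E2) (gradient u z) = fderiv ℝ u z :=
      (InnerProductSpace.toDual ℝ E2).apply_symm_apply (fderiv ℝ u z)
    rw [h, _root_.map_zero] at h2
    exact h2.symm
  -- the key local statement
  have key : ∀ p ∈ closure Ω, ∃ V : Set E2, IsOpen V ∧ p ∈ V ∧ ∀ z ∈ S ∩ V, z = p := by
    intro p hp
    have hpU : p ∈ U := hsub hp
    by_cases hup : u p ≠ 0
    · -- u p ≠ 0 : a neighborhood avoids the zero set
      have hev : ∀ᶠ z in 𝓝 p, u z ≠ 0 := (hu p hpU).continuousAt.eventually_ne hup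
      obtain ⟨V, hV1, hV2, hV3⟩ := _root_.eventually_nhds_iff.1 hev
      exact ⟨V, hV2, hV3, fun z hz => absurd hz.1.2.1 (hV1 z hz.2)⟩
    push_neg at hup
    by_cases hgp : gradient u p ≠ 0
    · have hcg : ContinuousAt (gradient u) p := by
        have h1 : ContinuousAt (fderiv ℝ u) p := ((hu p hpU).fderiv).continuousAt
        exact ((InnerProductSpace.toDual ℝ E2).symm.continuous.continuousAt).comp h1
      have hev : ∀ᶠ z in 𝓝 p, gradient u z ≠ 0 := hcg.eventually_ne hgp
      obtain ⟨V, hV1, hV2, hV3⟩ := _root_.eventually_nhds_iff.1 hev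
      exact ⟨V, hV2, hV3, fun z hz => absurd hz.1.2.2 (hV1 z hz.2)⟩
    push_neg at hgp
    have hfp : fderiv ℝ u p = 0 := hgf p hgp
    -- power series of u at p, on a ball inside U
    obtain ⟨q, hqa⟩ := hu p hpU
    obtain ⟨r0, hq0⟩ := hqa
    obtain ⟨r1, hr1pos, hr1U⟩ := EMetric.mem_nhds_iff.1 (hUo.mem_nhds hpU)
    set r := min r0 r1 with hrdef
    have hrpos : 0 < r := lt_min hq0.r_pos hr1pos
    have hq : HasFPowerSeriesOnBall u q p r := hq0.mono hrpos (min_le_left _ _)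
    have hballU : EMetric.ball p r ⊆ U :=
      fun z hz => hr1U (EMetric.ball_subset_ball (min_le_right _ _) hz)
    -- the order of vanishing
    have hex : ∃ n, (fun y : E2 => q n (fun _ => y)) ≠ 0 := by
      by_contra hco
      push_neg at hco
      have hu0 : ∀ᶠ z in 𝓝 p, u z = 0 := by
        filter_upwards [EMetric.ball_mem_nhds p hrpos] with z hz
        have hy : z - p ∈ EMetric.ball (0 : E2) r := by
          show edist (z - p) 0 < r
          simpa [EMetric.mem_ball, edist_eq_enorm_sub] using hz
        have hs := hq.hasSum hy
        have hterm : (fun n => q n (fun _ => z - p)) = fun _ => (0 : ℝ) := by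
          funext n
          have := congrFun (hco n) (z - p)
          simpa using this
        rw [hterm] at hs
        have := hs.unique hasSum_zero
        rwa [add_sub_cancel] at this
      have hEq : u =ᶠ[𝓝 p] 0 := hu0.mono (fun z hz => by simp [hz])
      have := hu.eqOn_zero_of_preconnected_of_eventuallyEq_zero
        hUconn.isPreconnected hpU hEq
      obtain ⟨z, hzU, hz⟩ := hne
      exact hz (this hzU)
    set N := Nat.find hex with hNdef
    have hvN : (fun y : E2 => q N (fun _ => y)) ≠ 0 := Nat.find_spec hex
    have hmin : ∀ k, k < N → (fun y : E2 => q k (fun _ => y)) = 0 :=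
      fun k hk => not_not.1 (Nat.find_min hex hk)
    -- N ≥ 2
    have hN2 : 2 ≤ N := by
      have v0 : (fun y : E2 => q 0 (fun _ => y)) = 0 := by
        funext y
        have := hq.coeff_zero (fun _ => y)
        simp only [this, hup, Pi.zero_apply]
      have v1 : (fun y : E2 => q 1 (fun _ => y)) = 0 := by
        funext y
        have h1 := hq.factorial_smul y 1
        rw [iteratedFDeriv_one_apply, hfp] at h1
        simpa [Nat.factorial] using h1
      rcases Nat.lt_or_ge N 2 with h | h
      · interval_cases N
        · exact absurd v0 hvN
        · exact absurd v1 hvN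
      · exact h
    -- the leading homogeneous part
    set Q : E2 → ℝ := fun y => q N (fun _ => y) with hQdef
    have hQfin := hasFiniteFPowerSeriesOnBall_diag q N
    have hQan : ∀ y, AnalyticAt ℝ Q y := fun y =>
      hQfin.toHasFPowerSeriesOnBall.analyticAt_of_mem (by simp)
    have hQdiff : ∀ y, DifferentiableAt ℝ Q y := fun y => (hQan y).differentiableAt
    have hQhom : ∀ (t : ℝ) (y : E2), Q (t • y) = t ^ N * Q y := by
      intro t y
      have := (q N).map_smul_univ (fun _ : Fin N => t) (fun _ => y)
      simpa [Finset.prod_const, smul_eq_mul] using this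
    have hQ0 : Q 0 = 0 :=
      (q N).map_coord_zero (⟨0, by omega⟩ : Fin N) rfl
    -- harmonicity of Q
    set Phi : (E2 →L[ℝ] E2 →L[ℝ] ℝ) →L[ℝ] ℝ :=
      ∑ i : Fin 2, (ContinuousLinearMap.apply ℝ ℝ (ee i)).comp
        (ContinuousLinearMap.apply ℝ (E2 →L[ℝ] ℝ) (ee i)) with hPhidef
    have hPhi : ∀ B : E2 →L[ℝ] E2 →L[ℝ] ℝ, Phi B = B (ee 0) (ee 0) + B (ee 1) (ee 1) := by
      intro B
      simp [hPhidef, Fin.sum_univ_two]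
    have hlap : ∀ z, lap u z = Phi (fderiv ℝ (fderiv ℝ u) z) := by
      intro z
      rw [hPhi]
      simp only [lap, Fin.sum_univ_two, iteratedFDeriv_two_apply]
      rfl
    set cLam : ℝ →L[ℝ] ℝ := lam • ContinuousLinearMap.id ℝ ℝ with hcLamdef
    have hq2 := hq.fderiv.fderiv
    have h1 := (Phi.comp_hasFPowerSeriesOnBall hq2).add (cLam.comp_hasFPowerSeriesOnBall hq)
    have h2 : EqOn ((Phi ∘ fderiv ℝ (fderiv ℝ u)) + (cLam ∘ u)) 0 (EMetric.ball p r) := by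
      intro z hz
      have := heq z (hballU hz)
      simp only [Pi.add_apply, Function.comp_apply, Pi.zero_apply, hcLamdef,
        ContinuousLinearMap.smul_apply, ContinuousLinearMap.id_apply, smul_eq_mul]
      rw [← hlap z]
      exact this
    have hzero := (h1.congr h2).hasFPowerSeriesAt
    have hZ := hzero.apply_eq_zero
    have hharm : ∀ y, fderiv ℝ (fderiv ℝ Q) y (ee 0) (ee 0)
        + fderiv ℝ (fderiv ℝ Q) y (ee 1) (ee 1) = 0 := by
      intro y
      have hz := hZ (N - 2) y
      have hclam : ∀ x : ℝ, cLam x = lam * x := by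
        intro x
        simp [hcLamdef]
      have hz' : Phi (q.derivSeries.derivSeries (N - 2) (fun _ => y))
          + lam * (q (N - 2) (fun _ => y)) = 0 := by
        rw [← hclam]
        exact hz
      have hq0' : q (N - 2) (fun _ => y) = 0 := by
        have := congrFun (hmin (N - 2) (by omega)) y
        simpa using this
      rw [hq0', mul_zero, add_zero] at hz'
      have hNN : 1 + (1 + (N - 2)) = N := by omega
      have hQeq : (fun z' : E2 => q (1 + (1 + (N - 2))) (fun _ => z')) = Q := by rw [hNN]
      have hstep2 : (fun z : E2 => q.derivSeries (1 + (N - 2)) (fun _ => z)) = fderiv ℝ Q := by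
        funext z
        rw [derivSeries_apply_diag_eq_fderiv q (1 + (N - 2)) z, hQeq]
      have hstep1 : q.derivSeries.derivSeries (N - 2) (fun _ => y)
          = fderiv ℝ (fderiv ℝ Q) y := by
        rw [derivSeries_apply_diag_eq_fderiv q.derivSeries (N - 2) y, hstep2]
      rw [hstep1, hPhi] at hz'
      exact hz'
    -- nondegeneracy of the gradient of Q
    have hQcrit : ∀ y : E2, y ≠ 0 → fderiv ℝ Q y ≠ 0 := by
      intro y hy h0
      have hconst := eq_const_of_critical Q N (by omega) hQan hQhom hharm y hy h0
      apply hvN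
      funext w
      have hw := hconst w
      rw [hQ0] at hw
      simpa using hw
    -- minimum of the gradient norm on the sphere
    have hDQcont : Continuous (fun y => fderiv ℝ Q y) := by
      rw [continuous_iff_continuousAt]
      exact fun y => ((hQan y).fderiv).continuousAt
    have hsphne : (sphere (0:E2) 1).Nonempty := by
      refine ⟨ee 0, ?_⟩
      rw [mem_sphere_zero_iff_norm]
      simp [ee]
    obtain ⟨y₁, hy₁s, hy₁min⟩ := (isCompact_sphere (0:E2) 1).exists_isMinOn hsphne
      ((hDQcont.norm).continuousOn)
    set c := ‖fderiv ℝ Q y₁‖ with hcdef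
    have hy₁ne : y₁ ≠ 0 := by
      intro h
      rw [h, mem_sphere_zero_iff_norm] at hy₁s
      simp at hy₁s
    have hcpos : 0 < c := by
      rw [hcdef, norm_pos_iff]
      exact hQcrit y₁ hy₁ne
    -- Taylor estimate for the derivative of u
    have hbig := hq.fderiv.hasFPowerSeriesAt.isBigO_sub_partialSum_pow N
    have hps : ∀ y : E2, q.derivSeries.partialSum N y = fderiv ℝ Q y := by
      intro y
      rw [FormalMultilinearSeries.partialSum]
      rw [Finset.sum_eq_single_of_mem (N - 1) (Finset.mem_range.2 (by omega))]
      · rw [derivSeries_apply_diag_eq_fderiv q (N - 1) y]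
        have hN1 : 1 + (N - 1) = N := by omega
        have heq1 : (fun z : E2 => q (1 + (N - 1)) (fun _ => z)) = Q := by rw [hN1]
        rw [heq1]
      · intro k hk hkne
        rw [derivSeries_apply_diag_eq_fderiv q k y]
        have hk' : 1 + k < N := by
          have := Finset.mem_range.1 hk; omega
        rw [hmin (1 + k) hk']
        rw [show (0 : E2 → ℝ) = fun _ : E2 => (0:ℝ) from rfl, fderiv_fun_const]
        rfl
    have hbig' : (fun y => fderiv ℝ u (p + y) - fderiv ℝ Q y) =O[𝓝 0]
        (fun y : E2 => ‖y‖ ^ N) := by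
      refine hbig.congr' ?_ EventuallyEq.rfl
      filter_upwards with y
      rw [hps y]
    obtain ⟨C, hC⟩ := Asymptotics.isBigO_iff.1 hbig'
    obtain ⟨δ, hδpos, hδ⟩ := Metric.eventually_nhds_iff_ball.1 hC
    set C1 := max C 1 with hC1def
    have hC1pos : (0:ℝ) < C1 := lt_of_lt_of_le one_pos (le_max_right _ _)
    set ε := min δ (c / C1) with hεdef
    have hεpos : 0 < ε := lt_min hδpos (div_pos hcpos hC1pos)
    refine ⟨ball p ε, isOpen_ball, mem_ball_self hεpos, ?_⟩
    rintro z ⟨hzS, hzb⟩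
    by_contra hzp
    set y := z - p with hydef
    have hyne : y ≠ 0 := sub_ne_zero.2 hzp
    have ht : 0 < ‖y‖ := norm_pos_iff.2 hyne
    have hyε : ‖y‖ < ε := by
      have h8 : dist z p < ε := mem_ball.1 hzb
      rwa [hydef, ← dist_eq_norm]
    have hyδ : ‖y‖ < δ := lt_of_lt_of_le hyε (min_le_left _ _)
    have hyc : ‖y‖ < c / C1 := lt_of_lt_of_le hyε (min_le_right _ _)
    have hup2 : ‖fderiv ℝ u (p + y) - fderiv ℝ Q y‖ ≤ C1 * ‖y‖ ^ N := by
      have h3 := hδ y (by simpa [mem_ball, dist_eq_norm] using hyδ)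
      have h4 : ‖(‖y‖ ^ N)‖ = ‖y‖ ^ N :=
        Real.norm_of_nonneg (pow_nonneg (norm_nonneg y) N)
      rw [h4] at h3
      calc ‖fderiv ℝ u (p + y) - fderiv ℝ Q y‖ ≤ C * ‖y‖ ^ N := h3
        _ ≤ C1 * ‖y‖ ^ N := by
            apply mul_le_mul_of_nonneg_right (le_max_left _ _)
            exact pow_nonneg (norm_nonneg y) N
    have hlow : c * ‖y‖ ^ (N - 1) ≤ ‖fderiv ℝ Q y‖ := by
      have htne : ‖y‖ ≠ 0 := ne_of_gt ht
      set w := (‖y‖)⁻¹ • y with hwdef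
      have hws : w ∈ sphere (0:E2) 1 := by
        rw [mem_sphere_zero_iff_norm, hwdef, norm_smul, norm_inv, norm_norm]
        exact inv_mul_cancel₀ htne
      have hyw : y = ‖y‖ • w := (smul_inv_smul₀ htne y).symm
      conv_rhs => rw [hyw]
      rw [fderiv_homog Q N (by omega) hQdiff hQhom htne w, norm_smul]
      have h5 : ‖(‖y‖ ^ (N-1))‖ = ‖y‖ ^ (N-1) :=
        Real.norm_of_nonneg (pow_nonneg (norm_nonneg y) _)
      rw [h5]
      have h6 : c ≤ ‖fderiv ℝ Q w‖ := hy₁min hws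
      have h7 : (0:ℝ) ≤ ‖y‖ ^ (N-1) := pow_nonneg (norm_nonneg y) _
      nlinarith
    have hfz : fderiv ℝ u z = 0 := hgf z hzS.2.2
    have hpz : p + y = z := by rw [hydef]; abel
    rw [hpz, hfz, zero_sub, norm_neg] at hup2
    have hfin : C1 * ‖y‖ ^ N < c * ‖y‖ ^ (N - 1) := by
      have hNsplit : ‖y‖ ^ N = ‖y‖ * ‖y‖ ^ (N - 1) := by
        conv_lhs => rw [show N = 1 + (N - 1) by omega]
        rw [pow_add, pow_one]
      rw [hNsplit]
      have h7 : C1 * ‖y‖ < c := by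
        rwa [lt_div_iff₀ hC1pos, mul_comm] at hyc
      nlinarith [pow_pos ht (N - 1)]
    linarith [le_trans hlow hup2]
  -- conclude by compactness
  have hK : IsCompact (closure Ω) :=
    Metric.isCompact_of_isClosed_isBounded isClosed_closure hΩb.closure
  choose V hVopen hVmem hVsub using key
  obtain ⟨t, htcover⟩ := hK.elim_nhds_subcover' (fun p hp => V p hp)
    (fun p hp => (hVopen p hp).mem_nhds (hVmem p hp))
  apply Set.Finite.subset (t.finite_toSet.image (fun x : {z : E2 // z ∈ closure Ω} => (x : E2)))
  intro z hz
  have hzc : z ∈ closure Ω := hz.1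
  have := htcover hzc
  simp only [mem_iUnion] at this
  obtain ⟨x, hx, hzV⟩ := this
  have hzx : z = (x : E2) := hVsub (x : E2) x.2 z ⟨hz, hzV⟩
  exact ⟨x, by simpa using hx, hzx.symm⟩
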